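/- Let d ≥ 1 be an integer and 1 ≤ p < d. There exists a constant C = C(d,p) > 0 such that for every continuously differentiable function u with compact support in ℝ^d, one has ∫_{ℝ^d} |u(x)|^p / |x|^p dx ≤ C ∫_{ℝ^d} |∇u(x)|^p dx. -/

import Mathlib

open MeasureTheory Real Set
open scoped ENNReal

theorem hardy_lintegral_comp_smul {d : ℕ} (f : EuclideanSpace ℝ (Fin d) → ℝ≥0∞) (hf : Measurable f)
    {s : ℝ} (hs : s ≠ 0) :
    ∫⁻ x, f (s • x) = ENNReal.ofReal |(s ^ d)⁻¹| * ∫⁻ x, f x := by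
  have h1 : (volume : Measure (EuclideanSpace ℝ (Fin d))).map (s • ·)
      = ENNReal.ofReal |(s ^ Module.finrank ℝ (EuclideanSpace ℝ (Fin d)))⁻¹| • volume :=
    Measure.map_addHaar_smul volume hs
  have h2 : ∫⁻ x, f (s • x) = ∫⁻ y, f y ∂((volume : Measure (EuclideanSpace ℝ (Fin d))).map (s • ·)) := by
    rw [lintegral_map hf (measurable_const_smul s)]
  rw [h2, h1, lintegral_smul_measure, finrank_euclideanSpace_fin, smul_eq_mul]

theorem hardy_rpow_finite {c : ℝ} (hc : c < -1) :
    ∫⁻ s in Ioi (1:ℝ), ENNReal.ofReal (s ^ c) < ∞ := by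
  have h : IntegrableOn (fun s : ℝ => s ^ c) (Ioi 1) := by
    rw [integrableOn_Ioi_rpow_iff zero_lt_one]; exact hc
  exact h.lintegral_lt_top

theorem hardy_fubini {d : ℕ} (hd : 1 ≤ d) (G : EuclideanSpace ℝ (Fin d) → ℝ≥0∞)
    (hG : Measurable G) (b : ℝ) :
    ∫⁻ x, ∫⁻ s in Ioi (1:ℝ), ENNReal.ofReal (s ^ b) * G (s • x) ∂volume ∂volume
      = (∫⁻ s in Ioi (1:ℝ), ENNReal.ofReal (s ^ (b - d))) * ∫⁻ x, G x := by
  have hmeas : Measurable (Function.uncurry fun (x : EuclideanSpace ℝ (Fin d)) (s : ℝ) =>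
      ENNReal.ofReal (s ^ b) * G (s • x)) := by
    apply Measurable.mul
    · exact ENNReal.measurable_ofReal.comp (measurable_snd.pow_const b)
    · exact hG.comp ((continuous_snd.smul continuous_fst).measurable)
  rw [lintegral_lintegral_swap hmeas.aemeasurable]
  have hinner : ∀ s ∈ Ioi (1:ℝ),
      ∫⁻ x, ENNReal.ofReal (s ^ b) * G (s • x) ∂volume
        = ENNReal.ofReal (s ^ (b - (d:ℝ))) * ∫⁻ x, G x := by
    intro s hs
    have hs0 : (0:ℝ) < s := lt_trans zero_lt_one hs
    have hm1 : Measurable fun x : EuclideanSpace ℝ (Fin d) => G (s • x) :=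
      hG.comp (measurable_const_smul s)
    rw [lintegral_const_mul _ hm1, hardy_lintegral_comp_smul G hG hs0.ne']
    rw [← mul_assoc, ← ENNReal.ofReal_mul (by positivity)]
    congr 2
    rw [abs_of_nonneg (by positivity), Real.rpow_sub hs0, ← Real.rpow_natCast s d]
    rw [div_eq_mul_inv]
  rw [setLIntegral_congr_fun measurableSet_Ioi hinner]
  have hm2 : Measurable fun s : ℝ => ENNReal.ofReal (s ^ (b - (d:ℝ))) :=
    ENNReal.measurable_ofReal.comp (measurable_id.pow_const _)
  rw [lintegral_mul_const _ hm2]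

theorem hardy_ftc {d : ℕ} {u : EuclideanSpace ℝ (Fin d) → ℝ} (hu : ContDiff ℝ 1 u)
    (hsupp : HasCompactSupport u) {x : EuclideanSpace ℝ (Fin d)} (hx : x ≠ 0) :
    ENNReal.ofReal |u x|
      ≤ (‖x‖₊ : ℝ≥0∞) * ∫⁻ s in Ioi (1:ℝ), (‖fderiv ℝ u (s • x)‖₊ : ℝ≥0∞) := by
  obtain ⟨R, hR⟩ := hsupp.isBounded.subset_closedBall 0
  have hxpos : (0:ℝ) < ‖x‖ := norm_pos_iff.2 hx
  set T : ℝ := max 1 ((R + 1) / ‖x‖) with hT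
  have hT1 : (1:ℝ) ≤ T := le_max_left _ _
  have hTx : u (T • x) = 0 := by
    apply image_eq_zero_of_notMem_tsupport
    intro hmem
    have h1 : ‖T • x‖ ≤ R := by simpa using Metric.mem_closedBall.1 (hR hmem)
    have h2 : R + 1 ≤ ‖T • x‖ := by
      rw [norm_smul, Real.norm_eq_abs, abs_of_pos (lt_of_lt_of_le zero_lt_one hT1)]
      calc R + 1 = ((R + 1) / ‖x‖) * ‖x‖ := by field_simp
        _ ≤ T * ‖x‖ := by
            apply mul_le_mul_of_nonneg_right (le_max_right _ _) hxpos.le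
    linarith
  have hderiv : ∀ s : ℝ, HasDerivAt (fun s : ℝ => u (s • x)) ((fderiv ℝ u (s • x)) x) s := by
    intro s
    have h1 : HasDerivAt (fun s : ℝ => s • x) x s := by
      simpa using (hasDerivAt_id s).smul_const x
    exact ((hu.differentiable one_ne_zero (s • x)).hasFDerivAt).comp_hasDerivAt s h1
  have contf : Continuous fun s : ℝ => fderiv ℝ u (s • x) :=
    (hu.continuous_fderiv one_ne_zero).comp (continuous_id.smul continuous_const)
  have cont2 : Continuous fun s : ℝ => (fderiv ℝ u (s • x)) x := by fun_prop
  have hFTC : ∫ s in (1:ℝ)..T, (fderiv ℝ u (s • x)) x = u (T • x) - u x := by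
    have := intervalIntegral.integral_eq_sub_of_hasDerivAt
      (f := fun s : ℝ => u (s • x)) (fun s _ => hderiv s) (cont2.intervalIntegrable 1 T)
    simpa using this
  have hux : |u x| = |∫ s in (1:ℝ)..T, (fderiv ℝ u (s • x)) x| := by
    rw [hFTC, hTx]; simp [abs_sub_comm]
  have step1 : |u x| ≤ ∫ s in (1:ℝ)..T, ‖fderiv ℝ u (s • x)‖ * ‖x‖ := by
    rw [hux]
    calc |∫ s in (1:ℝ)..T, (fderiv ℝ u (s • x)) x|
        ≤ ∫ s in (1:ℝ)..T, |(fderiv ℝ u (s • x)) x| := by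
          simpa using intervalIntegral.norm_integral_le_integral_norm
            (f := fun s : ℝ => (fderiv ℝ u (s • x)) x) hT1
      _ ≤ ∫ s in (1:ℝ)..T, ‖fderiv ℝ u (s • x)‖ * ‖x‖ := by
          apply intervalIntegral.integral_mono_on hT1
            (cont2.abs.intervalIntegrable 1 T)
            ((contf.norm.mul continuous_const).intervalIntegrable 1 T)
          intro s _
          exact (fderiv ℝ u (s • x)).le_opNorm x
  have step2 : ENNReal.ofReal (∫ s in (1:ℝ)..T, ‖fderiv ℝ u (s • x)‖ * ‖x‖)
      ≤ (‖x‖₊ : ℝ≥0∞) * ∫⁻ s in Ioi (1:ℝ), (‖fderiv ℝ u (s • x)‖₊ : ℝ≥0∞) := by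
    rw [intervalIntegral.integral_of_le hT1,
      ofReal_integral_eq_lintegral_ofReal (f := fun s => ‖fderiv ℝ u (s • x)‖ * ‖x‖)
        (((contf.norm.mul continuous_const)).integrableOn_Ioc)
        (Filter.Eventually.of_forall fun s => by positivity)]
    calc ∫⁻ s in Ioc (1:ℝ) T, ENNReal.ofReal (‖fderiv ℝ u (s • x)‖ * ‖x‖)
        ≤ ∫⁻ s in Ioi (1:ℝ), ENNReal.ofReal (‖fderiv ℝ u (s • x)‖ * ‖x‖) :=
          lintegral_mono_set Ioc_subset_Ioi_self
      _ = (‖x‖₊ : ℝ≥0∞) * ∫⁻ s in Ioi (1:ℝ), (‖fderiv ℝ u (s • x)‖₊ : ℝ≥0∞) := by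
          rw [← lintegral_const_mul' _ _ ENNReal.coe_ne_top]
          congr 1 with s
          rw [ENNReal.ofReal_mul (norm_nonneg _), ofReal_norm, enorm_eq_nnnorm,
            ofReal_norm, enorm_eq_nnnorm, mul_comm]
  exact le_trans (by exact_mod_cast ENNReal.ofReal_le_ofReal step1) step2

theorem hardy_mono {d : ℕ} (hd : 1 ≤ d) {p : ℝ} (hp0 : 0 < p)
    {u : EuclideanSpace ℝ (Fin d) → ℝ} (hu : ContDiff ℝ 1 u) (hsupp : HasCompactSupport u) :
    ∫⁻ x, (ENNReal.ofReal |u x| / (‖x‖₊ : ℝ≥0∞)) ^ p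
      ≤ ∫⁻ x, (∫⁻ s in Ioi (1:ℝ), (‖fderiv ℝ u (s • x)‖₊ : ℝ≥0∞)) ^ p := by
  have hzero : (volume : Measure (EuclideanSpace ℝ (Fin d))) {0} = 0 := by
    have h1 : ({0} : Set (EuclideanSpace ℝ (Fin d))) ⊆ Metric.closedBall 0 0 := by
      simp
    refine le_antisymm (le_trans (measure_mono h1) ?_) (by simp)
    rw [Measure.addHaar_closedBall _ _ le_rfl]
    simp [finrank_euclideanSpace_fin, zero_pow (by omega : d ≠ 0)]
  have hae : ∀ᵐ x : EuclideanSpace ℝ (Fin d), x ≠ 0 := by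
    rw [ae_iff]; simpa using hzero
  apply lintegral_mono_ae
  filter_upwards [hae] with x hx
  apply ENNReal.rpow_le_rpow _ hp0.le
  rw [ENNReal.div_le_iff (by simpa using hx) ENNReal.coe_ne_top]
  simpa [mul_comm] using hardy_ftc hu hsupp hx

theorem hardy_main_lintegral {d : ℕ} (hd : 1 ≤ d) {p : ℝ} (hp : 1 ≤ p) (hpd : p < d) :
    ∃ Cenn : ℝ≥0∞, Cenn ≠ ∞ ∧
      ∀ u : EuclideanSpace ℝ (Fin d) → ℝ, ContDiff ℝ 1 u → HasCompactSupport u →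
      ∫⁻ x, (ENNReal.ofReal |u x| / (‖x‖₊ : ℝ≥0∞)) ^ p
        ≤ Cenn * ∫⁻ x, (‖fderiv ℝ u x‖₊ : ℝ≥0∞) ^ p := by
  classical
  have hp0 : (0:ℝ) < p := lt_of_lt_of_le zero_lt_one hp
  rcases eq_or_lt_of_le hp with hp1 | hp1
  · -- p = 1
    refine ⟨∫⁻ s in Ioi (1:ℝ), ENNReal.ofReal (s ^ ((0:ℝ) - d)), ?_, ?_⟩
    · exact (hardy_rpow_finite (by nlinarith [hp1, hpd])).ne
    · intro u hu hsupp
      have hGmeas : Measurable fun y : EuclideanSpace ℝ (Fin d) =>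
          (‖fderiv ℝ u y‖₊ : ℝ≥0∞) ^ p := by
        have : Continuous fun y : EuclideanSpace ℝ (Fin d) => fderiv ℝ u y :=
          hu.continuous_fderiv one_ne_zero
        fun_prop
      calc ∫⁻ x, (ENNReal.ofReal |u x| / (‖x‖₊ : ℝ≥0∞)) ^ p
          ≤ ∫⁻ x, (∫⁻ s in Ioi (1:ℝ), (‖fderiv ℝ u (s • x)‖₊ : ℝ≥0∞)) ^ p :=
            hardy_mono hd hp0 hu hsupp
        _ = ∫⁻ x, ∫⁻ s in Ioi (1:ℝ),
              ENNReal.ofReal (s ^ (0:ℝ)) * ((‖fderiv ℝ u (s • x)‖₊ : ℝ≥0∞) ^ p) := by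
            congr 1 with x
            rw [← hp1, ENNReal.rpow_one]
            apply setLIntegral_congr_fun measurableSet_Ioi
            intro s hs
            simp [Real.rpow_zero, ENNReal.rpow_one]
        _ = (∫⁻ s in Ioi (1:ℝ), ENNReal.ofReal (s ^ ((0:ℝ) - d))) *
              ∫⁻ x, (‖fderiv ℝ u x‖₊ : ℝ≥0∞) ^ p := hardy_fubini hd _ hGmeas 0
  · -- 1 < p
    have hd2 : (2:ℝ) ≤ (d:ℝ) := by
      have h1 : (1:ℝ) < (d:ℝ) := lt_of_le_of_lt hp hpd
      have h2 : 1 < d := by exact_mod_cast h1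
      exact_mod_cast h2
    set q : ℝ := p / (p - 1) with hqdef
    have hq : p.HolderConjugate q := Real.HolderConjugate.conjExponent hp1
    have hq0 : 0 < q := hq.symm.pos
    set a : ℝ := (p + d - 2) / (2 * p) with hadef
    have ha0 : 0 < a := by
      apply div_pos (by linarith) (by linarith)
    have haq : 1 < a * q := by
      rw [hadef, hqdef]
      rw [div_mul_div_comm, lt_div_iff₀ (by nlinarith)]
      nlinarith
    have hapd : a * p - (d:ℝ) < -1 := by
      have hap : a * p = (p + (d:ℝ) - 2) / 2 := by
        rw [hadef]; field_simp
      rw [hap]; linarith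
    set A : ℝ≥0∞ := ∫⁻ s in Ioi (1:ℝ), ENNReal.ofReal (s ^ (-(a * q))) with hAdef
    have hA : A ≠ ∞ := (hardy_rpow_finite (by linarith)).ne
    set K2 : ℝ≥0∞ := ∫⁻ s in Ioi (1:ℝ), ENNReal.ofReal (s ^ (a * p - (d:ℝ))) with hK2def
    have hK2 : K2 ≠ ∞ := (hardy_rpow_finite hapd).ne
    refine ⟨A ^ ((1/q) * p) * K2, ?_, ?_⟩
    · exact ENNReal.mul_ne_top
        (ENNReal.rpow_ne_top_of_nonneg (by positivity) hA) hK2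
    intro u hu hsupp
    have hGmeas : Measurable fun y : EuclideanSpace ℝ (Fin d) =>
        (‖fderiv ℝ u y‖₊ : ℝ≥0∞) ^ p := by
      have : Continuous fun y : EuclideanSpace ℝ (Fin d) => fderiv ℝ u y :=
        hu.continuous_fderiv one_ne_zero
      fun_prop
    have hgmeas : ∀ x : EuclideanSpace ℝ (Fin d),
        Measurable fun s : ℝ => (‖fderiv ℝ u (s • x)‖₊ : ℝ≥0∞) := by
      intro x
      have : Continuous fun s : ℝ => fderiv ℝ u (s • x) :=
        (hu.continuous_fderiv one_ne_zero).comp (continuous_id.smul continuous_const)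
      fun_prop
    set B : EuclideanSpace ℝ (Fin d) → ℝ≥0∞ := fun x =>
      ∫⁻ s in Ioi (1:ℝ), ENNReal.ofReal (s ^ (a * p)) * ((‖fderiv ℝ u (s • x)‖₊ : ℝ≥0∞) ^ p)
      with hBdef
    have hpoint : ∀ x : EuclideanSpace ℝ (Fin d),
        (∫⁻ s in Ioi (1:ℝ), (‖fderiv ℝ u (s • x)‖₊ : ℝ≥0∞)) ^ p ≤ A ^ ((1/q) * p) * B x := by
      intro x
      set g : ℝ → ℝ≥0∞ := fun s => (‖fderiv ℝ u (s • x)‖₊ : ℝ≥0∞) with hgdef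
      set φ : ℝ → ℝ≥0∞ := fun s => ENNReal.ofReal (s ^ (-a)) with hφdef
      set ψ : ℝ → ℝ≥0∞ := fun s => ENNReal.ofReal (s ^ a) * g s with hψdef
      have h1 : ∫⁻ s in Ioi (1:ℝ), g s = ∫⁻ s in Ioi (1:ℝ), (φ * ψ) s := by
        apply setLIntegral_congr_fun measurableSet_Ioi
        intro s hs
        have hs0 : (0:ℝ) < s := lt_trans zero_lt_one hs
        show g s = φ s * ψ s
        rw [hφdef, hψdef, ← mul_assoc, ← ENNReal.ofReal_mul (by positivity),
          ← Real.rpow_add hs0]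
        simp
      have hφm : AEMeasurable φ (volume.restrict (Ioi (1:ℝ))) :=
        (ENNReal.measurable_ofReal.comp (measurable_id.pow_const _)).aemeasurable
      have hψm : AEMeasurable ψ (volume.restrict (Ioi (1:ℝ))) :=
        ((ENNReal.measurable_ofReal.comp (measurable_id.pow_const _)).mul
          (hgmeas x)).aemeasurable
      have h2 := ENNReal.lintegral_mul_le_Lp_mul_Lq (volume.restrict (Ioi (1:ℝ)))
        hq.symm hφm hψm
      have h3 : ∫⁻ s in Ioi (1:ℝ), φ s ^ q = A := by
        rw [hAdef]
        apply setLIntegral_congr_fun measurableSet_Ioi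
        intro s hs
        have hs0 : (0:ℝ) < s := lt_trans zero_lt_one hs
        rw [hφdef]
        show ENNReal.ofReal (s ^ (-a)) ^ q = ENNReal.ofReal (s ^ (-(a * q)))
        rw [ENNReal.ofReal_rpow_of_nonneg (by positivity) hq0.le,
          ← Real.rpow_mul hs0.le, neg_mul]
      have h4 : ∫⁻ s in Ioi (1:ℝ), ψ s ^ p = B x := by
        rw [hBdef]
        apply setLIntegral_congr_fun measurableSet_Ioi
        intro s hs
        have hs0 : (0:ℝ) < s := lt_trans zero_lt_one hs
        rw [hψdef]
        show (ENNReal.ofReal (s ^ a) * g s) ^ p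
          = ENNReal.ofReal (s ^ (a * p)) * (g s ^ p)
        rw [ENNReal.mul_rpow_of_nonneg _ _ hp0.le,
          ENNReal.ofReal_rpow_of_nonneg (by positivity) hp0.le,
          ← Real.rpow_mul hs0.le]
      have h5 : ∫⁻ s in Ioi (1:ℝ), g s ≤ A ^ (1/q) * (B x) ^ (1/p) := by
        rw [h1]
        calc ∫⁻ s in Ioi (1:ℝ), (φ * ψ) s
            ≤ (∫⁻ s in Ioi (1:ℝ), φ s ^ q) ^ (1/q) * (∫⁻ s in Ioi (1:ℝ), ψ s ^ p) ^ (1/p) := h2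
          _ = A ^ (1/q) * (B x) ^ (1/p) := by rw [h3, h4]
      calc (∫⁻ s in Ioi (1:ℝ), g s) ^ p ≤ (A ^ (1/q) * (B x) ^ (1/p)) ^ p :=
            ENNReal.rpow_le_rpow h5 hp0.le
        _ = A ^ ((1/q) * p) * B x := by
            rw [ENNReal.mul_rpow_of_nonneg _ _ hp0.le, ← ENNReal.rpow_mul,
              ← ENNReal.rpow_mul, one_div_mul_cancel hp0.ne', ENNReal.rpow_one]
    calc ∫⁻ x, (ENNReal.ofReal |u x| / (‖x‖₊ : ℝ≥0∞)) ^ p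
        ≤ ∫⁻ x, (∫⁻ s in Ioi (1:ℝ), (‖fderiv ℝ u (s • x)‖₊ : ℝ≥0∞)) ^ p :=
          hardy_mono hd hp0 hu hsupp
      _ ≤ ∫⁻ x, A ^ ((1/q) * p) * B x := lintegral_mono hpoint
      _ = A ^ ((1/q) * p) * ∫⁻ x, B x := by
          rw [lintegral_const_mul' _ _
            (ENNReal.rpow_ne_top_of_nonneg (by positivity) hA)]
      _ = A ^ ((1/q) * p) * (K2 * ∫⁻ x, (‖fderiv ℝ u x‖₊ : ℝ≥0∞) ^ p) := by
          rw [hBdef, hK2def, hardy_fubini hd _ hGmeas (a * p)]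
      _ = A ^ ((1/q) * p) * K2 * ∫⁻ x, (‖fderiv ℝ u x‖₊ : ℝ≥0∞) ^ p := by ring

theorem stmt_6 (d : ℕ) (hd : 1 ≤ d) (p : ℝ) (hp : 1 ≤ p) (hpd : p < d) :
    ∃ C : ℝ, 0 < C ∧ ∀ u : EuclideanSpace ℝ (Fin d) → ℝ,
      ContDiff ℝ 1 u → HasCompactSupport u →
      ∫ x, |u x| ^ p / ‖x‖ ^ p ≤ C * ∫ x, ‖fderiv ℝ u x‖ ^ p := by
  obtain ⟨Cenn, hCtop, hC⟩ := hardy_main_lintegral hd hp hpd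
  have hp0 : (0:ℝ) < p := lt_of_lt_of_le zero_lt_one hp
  refine ⟨Cenn.toReal + 1, by positivity, ?_⟩
  intro u hu hsupp
  -- RHS integrability
  have hcontf : Continuous (fderiv ℝ u) := hu.continuous_fderiv one_ne_zero
  have hcontR : Continuous fun x : EuclideanSpace ℝ (Fin d) => ‖fderiv ℝ u x‖ ^ p :=
    hcontf.norm.rpow_const fun x => Or.inr hp0.le
  have hsuppR : HasCompactSupport fun x : EuclideanSpace ℝ (Fin d) => ‖fderiv ℝ u x‖ ^ p := by
    apply HasCompactSupport.comp_left (g := fun v : EuclideanSpace ℝ (Fin d) →L[ℝ] ℝ => ‖v‖ ^ p)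
      (hsupp.fderiv ℝ)
    simp [Real.zero_rpow hp0.ne']
  have hintR : Integrable (fun x : EuclideanSpace ℝ (Fin d) => ‖fderiv ℝ u x‖ ^ p) :=
    hcontR.integrable_of_hasCompactSupport hsuppR
  set J : ℝ := ∫ x, ‖fderiv ℝ u x‖ ^ p with hJdef
  have hJ0 : 0 ≤ J := integral_nonneg fun x => by positivity
  have hI : ∫⁻ x, (‖fderiv ℝ u x‖₊ : ℝ≥0∞) ^ p = ENNReal.ofReal J := by
    rw [hJdef, ofReal_integral_eq_lintegral_ofReal hintR
      (Filter.Eventually.of_forall fun x => by positivity)]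
    congr 1 with x
    rw [← enorm_eq_nnnorm, ← ofReal_norm, ENNReal.ofReal_rpow_of_nonneg (norm_nonneg _) hp0.le]
  -- LHS
  have hzero : (volume : Measure (EuclideanSpace ℝ (Fin d))) {0} = 0 := by
    have h1 : ({0} : Set (EuclideanSpace ℝ (Fin d))) ⊆ Metric.closedBall 0 0 := by simp
    refine le_antisymm (le_trans (measure_mono h1) ?_) (by simp)
    rw [Measure.addHaar_closedBall _ _ le_rfl]
    simp [finrank_euclideanSpace_fin, zero_pow (by omega : d ≠ 0)]
  have hae : ∀ᵐ x : EuclideanSpace ℝ (Fin d), x ≠ 0 := by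
    rw [ae_iff]; simpa using hzero
  set h : EuclideanSpace ℝ (Fin d) → ℝ := fun x => |u x| ^ p / ‖x‖ ^ p with hhdef
  have hmeas_h : Measurable h := by
    apply Measurable.div
    · exact (hu.continuous.abs.measurable).pow_const p
    · exact (continuous_norm.measurable).pow_const p
  have hpt : ∀ᵐ x : EuclideanSpace ℝ (Fin d),
      ENNReal.ofReal (h x) = (ENNReal.ofReal |u x| / (‖x‖₊ : ℝ≥0∞)) ^ p := by
    filter_upwards [hae] with x hx
    have hxn : (0:ℝ) < ‖x‖ := norm_pos_iff.2 hx
    rw [hhdef]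
    show ENNReal.ofReal (|u x| ^ p / ‖x‖ ^ p) = _
    rw [← Real.div_rpow (abs_nonneg _) (norm_nonneg _),
      ← ENNReal.ofReal_rpow_of_nonneg (by positivity) hp0.le,
      ENNReal.ofReal_div_of_pos hxn, ← enorm_eq_nnnorm, ← ofReal_norm]
  have hL : ∫⁻ x, ENNReal.ofReal (h x)
      = ∫⁻ x, (ENNReal.ofReal |u x| / (‖x‖₊ : ℝ≥0∞)) ^ p := lintegral_congr_ae hpt
  have hLle : ∫⁻ x, ENNReal.ofReal (h x) ≤ Cenn * ENNReal.ofReal J := by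
    rw [hL, ← hI]; exact hC u hu hsupp
  have hRfin : Cenn * ENNReal.ofReal J ≠ ∞ := ENNReal.mul_ne_top hCtop ENNReal.ofReal_ne_top
  have hh0 : 0 ≤ᵐ[volume] h := Filter.Eventually.of_forall fun x => by positivity
  have hint_h : Integrable h := by
    refine ⟨hmeas_h.aestronglyMeasurable, ?_⟩
    rw [hasFiniteIntegral_iff_ofReal hh0]
    exact lt_of_le_of_lt hLle (lt_top_iff_ne_top.2 hRfin)
  have heq : ∫ x, h x = (∫⁻ x, ENNReal.ofReal (h x)).toReal :=
    integral_eq_lintegral_of_nonneg_ae hh0 hmeas_h.aestronglyMeasurable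
  calc ∫ x, |u x| ^ p / ‖x‖ ^ p = (∫⁻ x, ENNReal.ofReal (h x)).toReal := heq
    _ ≤ (Cenn * ENNReal.ofReal J).toReal := ENNReal.toReal_mono hRfin hLle
    _ = Cenn.toReal * J := by rw [ENNReal.toReal_mul, ENNReal.toReal_ofReal hJ0]
    _ ≤ (Cenn.toReal + 1) * J := by nlinarith [ENNReal.toReal_nonneg (a := Cenn)]
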